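/- Suppose the graph G contains a k-clique with vertex set Q. Define N^1 = T_0 ∪ {edges of G with both endpoints in Q} and N^2 = T ∪ (W \ {edges with both endpoints in Q}). Then both sum_{i in N^1} p_i + sum_{j in union_{i in N^1} M(i)} p_j and sum_{i in N^2} p_i + sum_{j in union_{i in N^2} M(i)} p_j equal n + |W| + k. -/

import Mathlib

open Finset

section CliqueInstance

variable {V : Type*} [Fintype V] [DecidableEq V]

/-- The edges of `G`, as a subtype. -/
abbrev EdgeT (G : SimpleGraph V) [DecidableRel G.Adj] := {e : Sym2 V // e ∈ G.edgeFinset}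

/-- `|T| = (k² + k)/2`. -/
def tcard (k : ℕ) : ℕ := (k ^ 2 + k) / 2

/-- `|S| = n + |W| - (k² - k)/2 - 1`. -/
def scard (G : SimpleGraph V) [DecidableRel G.Adj] (k : ℕ) : ℕ :=
  Fintype.card V + G.edgeFinset.card - (k ^ 2 - k) / 2 - 1

/-- The set `N = W ∪ T ∪ T₀` of the MWPSAS instance, as a type. -/
abbrev NT (G : SimpleGraph V) [DecidableRel G.Adj] (k : ℕ) :=
  EdgeT G ⊕ (Fin (tcard k) ⊕ Fin 1)

/-- The set `M = V ∪ S` of the MWPSAS instance, as a type. -/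
abbrev MT (G : SimpleGraph V) [DecidableRel G.Adj] (k : ℕ) := V ⊕ Fin (scard G k)

/-- The associated subsets: an edge is associated with its endpoints,
an element of `T` with `V`, and the element of `T₀` with `S`. -/
def Ma (G : SimpleGraph V) [DecidableRel G.Adj] (k : ℕ) : NT G k → Finset (MT G k)
  | Sum.inl e => (Finset.univ.filter (fun v => v ∈ (e : Sym2 V))).image Sum.inl
  | Sum.inr (Sum.inl _) => Finset.univ.image Sum.inl
  | Sum.inr (Sum.inr _) => Finset.univ.image Sum.inr

/-- The load of a part (all weights are 1):
`|P| + |⋃_{i ∈ P} M(i)|`. -/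
def load (G : SimpleGraph V) [DecidableRel G.Adj] (k : ℕ) (P : Finset (NT G k)) : ℕ :=
  P.card + (P.biUnion (Ma G k)).card

private lemma clique_edge_card (G : SimpleGraph V) [DecidableRel G.Adj] (k : ℕ)
    (Q : Finset V) (hQ : G.IsNClique k Q) :
    (G.edgeFinset.filter (fun e => ∀ v ∈ e, v ∈ Q)).card = (k + 1).choose 2 - k := by
  have h1 : G.edgeFinset.filter (fun e => ∀ v ∈ e, v ∈ Q)
      = Q.sym2.filter (fun e => ¬ e.IsDiag) := by
    ext e
    induction e with
    | _ a b =>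
      simp only [mem_filter, SimpleGraph.mem_edgeFinset, SimpleGraph.mem_edgeSet,
        Finset.mk_mem_sym2_iff, Sym2.isDiag_iff_proj_eq, Sym2.mem_iff]
      constructor
      · rintro ⟨hadj, h⟩
        exact ⟨⟨h a (Or.inl rfl), h b (Or.inr rfl)⟩, G.ne_of_adj hadj⟩
      · rintro ⟨⟨ha, hb⟩, hne⟩
        exact ⟨hQ.1 ha hb hne, by rintro v (rfl | rfl) <;> assumption⟩
  have h2 : Q.sym2.filter (fun e => Sym2.IsDiag e) = Q.image Sym2.diag := by
    ext e
    induction e with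
    | _ a b =>
      simp only [mem_filter, Finset.mk_mem_sym2_iff, Sym2.isDiag_iff_proj_eq, mem_image]
      constructor
      · rintro ⟨⟨ha, _⟩, rfl⟩; exact ⟨a, ha, rfl⟩
      · rintro ⟨x, hx, h⟩
        rw [Sym2.diag] at h
        replace h := (Sym2.mk_eq_mk_iff (p := (x, x)) (q := (a, b))).mp h
        simp only [Prod.mk.injEq, Prod.swap_prod_mk] at h
        obtain ⟨rfl, rfl⟩ : x = a ∧ x = b := by tauto
        exact ⟨⟨hx, hx⟩, rfl⟩
  have h3 := card_filter_add_card_filter_not (s := Q.sym2) (p := fun e => Sym2.IsDiag e)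
  rw [h1]
  rw [h2, card_image_of_injective _ Sym2.diag_injective, hQ.2, Finset.card_sym2, hQ.2] at h3
  omega

/-- If `G` contains a `k`-clique `Q`, then for `N¹ = T₀ ∪ {edges inside Q}` and
`N² = T ∪ (W \ {edges inside Q})`, both loads equal `n + |W| + k`. -/
theorem stmt_4 (G : SimpleGraph V) [DecidableRel G.Adj] (k n : ℕ)
    (hn : Fintype.card V = n) (hk : 1 < k) (hkn : k < n)
    (hkW : (k ^ 2 - k) / 2 < G.edgeFinset.card)
    (Q : Finset V) (hQ : G.IsNClique k Q)
    (N1 N2 : Finset (NT G k))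
    (hN1 : N1 =
      ((Finset.univ : Finset (Fin 1)).image
          (fun z => (Sum.inr (Sum.inr z) : NT G k))) ∪
      ((Finset.univ.filter
          (fun e : EdgeT G => ∀ v, v ∈ (e : Sym2 V) → v ∈ Q)).image
        (fun e => (Sum.inl e : NT G k))))
    (hN2 : N2 =
      ((Finset.univ : Finset (Fin (tcard k))).image
          (fun t => (Sum.inr (Sum.inl t) : NT G k))) ∪
      ((Finset.univ.filter
          (fun e : EdgeT G => ¬ ∀ v, v ∈ (e : Sym2 V) → v ∈ Q)).image
        (fun e => (Sum.inl e : NT G k)))) :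
    load G k N1 = n + G.edgeFinset.card + k ∧
      load G k N2 = n + G.edgeFinset.card + k := by
  set W := G.edgeFinset.card with hW
  -- arithmetic facts
  have hksq : k ≤ k ^ 2 := by nlinarith
  have heven1 : 2 * ((k ^ 2 - k) / 2) = k ^ 2 - k := by
    have h : Even (k ^ 2 - k) := by
      rw [Nat.even_sub hksq]
      simp [Nat.even_pow]
    obtain ⟨m, hm⟩ := h
    omega
  have heven2 : 2 * ((k ^ 2 + k) / 2) = k ^ 2 + k := by
    have h : Even (k ^ 2 + k) := by
      have h2 : k ^ 2 + k = k * (k + 1) := by ring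
      rw [h2]; exact Nat.even_mul_succ_self k
    obtain ⟨m, hm⟩ := h
    omega
  have hchoose : (k + 1).choose 2 = (k ^ 2 + k) / 2 := by
    rw [Nat.choose_two_right, Nat.add_sub_cancel]
    congr 1; ring
  -- card of edges inside Q
  have hecard := clique_edge_card G k Q hQ
  -- subtype filter cards
  have himg : (univ.filter (fun e : EdgeT G => ∀ v, v ∈ (e : Sym2 V) → v ∈ Q)).image
      Subtype.val = G.edgeFinset.filter (fun e => ∀ v ∈ e, v ∈ Q) := by
    ext e; simp [and_comm]
  have hsub : (univ.filter (fun e : EdgeT G => ∀ v, v ∈ (e : Sym2 V) → v ∈ Q)).card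
      = (k + 1).choose 2 - k := by
    rw [← hecard, ← himg, card_image_of_injective _ Subtype.val_injective]
  have htot := card_filter_add_card_filter_not
    (s := (univ : Finset (EdgeT G))) (p := fun e : EdgeT G => ∀ v, v ∈ (e : Sym2 V) → v ∈ Q)
  rw [card_univ, Fintype.card_coe] at htot
  have hinl_inj : Function.Injective (fun e : EdgeT G => (Sum.inl e : NT G k)) :=
    fun a b h => by simpa using h
  -- ===== N1 =====
  have hN1card : N1.card = 1 + ((k + 1).choose 2 - k) := by
    rw [hN1, card_union_of_disjoint (by simp [Finset.disjoint_left]),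
      card_image_of_injective _ (fun a b h => by simpa using h),
      card_image_of_injective _ hinl_inj, hsub]
    simp
  have hB1 : N1.biUnion (Ma G k)
      = (Q.image Sum.inl) ∪ ((univ : Finset (Fin (scard G k))).image Sum.inr) := by
    rw [hN1]
    ext x
    simp only [mem_biUnion, mem_union, mem_image, mem_filter, mem_univ, true_and]
    constructor
    · rintro ⟨a, (⟨z, rfl⟩ | ⟨e, he, rfl⟩), hx⟩
      · simp only [Ma, mem_image, mem_univ, true_and] at hx
        obtain ⟨s, rfl⟩ := hx
        exact Or.inr ⟨s, rfl⟩
      · simp only [Ma, mem_image, mem_filter, mem_univ, true_and] at hx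
        obtain ⟨v, hv, rfl⟩ := hx
        exact Or.inl ⟨v, he v hv, rfl⟩
    · rintro (⟨q, hq, rfl⟩ | ⟨s, rfl⟩)
      · obtain ⟨q', hq', hne⟩ := Finset.exists_mem_ne (by rw [hQ.2]; omega) q
        have hadj : G.Adj q q' := hQ.1 hq hq' (fun h => hne h.symm)
        have hedge : s(q, q') ∈ G.edgeFinset := by
          rw [SimpleGraph.mem_edgeFinset]; exact hadj
        refine ⟨Sum.inl ⟨s(q, q'), hedge⟩, Or.inr ⟨⟨s(q, q'), hedge⟩, ?_, rfl⟩, ?_⟩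
        · intro v hv
          rcases Sym2.mem_iff.mp hv with rfl | rfl <;> assumption
        · simp [Ma]
      · exact ⟨Sum.inr (Sum.inr 0), Or.inl ⟨0, rfl⟩, by simp [Ma]⟩
  have hB1card : (N1.biUnion (Ma G k)).card = k + scard G k := by
    rw [hB1, card_union_of_disjoint (by simp [Finset.disjoint_left]),
      card_image_of_injective _ Sum.inl_injective,
      card_image_of_injective _ Sum.inr_injective, hQ.2, card_univ, Fintype.card_fin]
  -- ===== N2 =====
  have hN2card : N2.card = tcard k + (W - ((k + 1).choose 2 - k)) := by
    rw [hN2, card_union_of_disjoint (by simp [Finset.disjoint_left]),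
      card_image_of_injective _ (fun a b h => by simpa using h),
      card_image_of_injective _ hinl_inj, card_univ, Fintype.card_fin]
    omega
  have htpos : 0 < tcard k := by unfold tcard; omega
  have hB2 : N2.biUnion (Ma G k) = (univ : Finset V).image Sum.inl := by
    rw [hN2]
    ext x
    simp only [mem_biUnion, mem_union, mem_image, mem_filter, mem_univ, true_and]
    constructor
    · rintro ⟨a, (⟨t, rfl⟩ | ⟨e, he, rfl⟩), hx⟩
      · simp only [Ma, mem_image, mem_univ, true_and] at hx
        obtain ⟨v, rfl⟩ := hx
        exact ⟨v, rfl⟩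
      · simp only [Ma, mem_image, mem_filter, mem_univ, true_and] at hx
        obtain ⟨v, _, rfl⟩ := hx
        exact ⟨v, rfl⟩
    · rintro ⟨v, rfl⟩
      exact ⟨Sum.inr (Sum.inl ⟨0, htpos⟩), Or.inl ⟨⟨0, htpos⟩, rfl⟩, by simp [Ma]⟩
  have hB2card : (N2.biUnion (Ma G k)).card = n := by
    rw [hB2, card_image_of_injective _ Sum.inl_injective, card_univ, hn]
  constructor
  · rw [load, hN1card, hB1card]
    unfold scard
    rw [hn]
    omega
  · rw [load, hN2card, hB2card]
    unfold tcard
    omega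

end CliqueInstance
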